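/- If S is an uncountable ω₁-compact subset of a tree of height ω₁ and S contains no uncountable chain, then the downward closure S↓ is a Suslin tree (height ω₁, all chains and antichains countable). -/

import Mathlib

open Set Topology Cardinal Ordinal

universe u v

/-- The order (interval) topology of a tree. -/
def treeTopology (T : Type u) [PartialOrder T] : TopologicalSpace T :=
  TopologicalSpace.generateFrom
    ({s | ∃ a b : T, a < b ∧ s = Set.Ioc a b} ∪
     {s | ∃ b : T, (∀ a : T, ¬a < b) ∧ s = {b}})

/-- A tree order: the predecessors of every element are well-ordered. -/
def IsTreeOrder (T : Type u) [PartialOrder T] : Prop :=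
  ∀ x : T, IsWellOrder {y : T // y < x} (· < ·)

/-- The height of an element: the order type of its set of predecessors. -/
noncomputable def treeHeight {T : Type u} [PartialOrder T] (hT : IsTreeOrder T) (x : T) :
    Ordinal.{u} :=
  @Ordinal.type {y : T // y < x} (· < ·) (hT x)

/-- Hausdorff tree: elements at limit levels are determined by their predecessors. -/
def IsHausdorffTree (T : Type u) [PartialOrder T] : Prop :=
  ∀ x y : T, Set.Iio x = Set.Iio y → (Set.Iio x).Nonempty →
    (∀ z ∈ Set.Iio x, ∃ w ∈ Set.Iio x, z < w) → x = y

/-- The tree has height ω₁. -/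
def HasHeightOmega1 {T : Type u} [PartialOrder T] (hT : IsTreeOrder T) : Prop :=
  (∀ x : T, treeHeight hT x < ω₁) ∧ ∀ α < ω₁, ∃ x : T, treeHeight hT x = α

/-- Downward closure of a subset of a tree. -/
def downClosure {T : Type u} [PartialOrder T] (S : Set T) : Set T := {x | ∃ y ∈ S, x ≤ y}

/-- `D` is a closed discrete subset of the subspace `S`. -/
def ClosedDiscreteIn {T : Type u} [TopologicalSpace T] (D S : Set T) : Prop :=
  D ⊆ S ∧ closure D ∩ S ⊆ D ∧ ∀ x ∈ D, ∃ U : Set T, IsOpen U ∧ x ∈ U ∧ U ∩ D = {x}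

/-- `S` is ω₁-compact in the subspace topology: every closed discrete subset is countable. -/
def OmegaOneCompactIn {T : Type u} [TopologicalSpace T] (S : Set T) : Prop :=
  ∀ D : Set T, ClosedDiscreteIn D S → D.Countable

/-- A club (closed unbounded) subset of `ω₁` (as a set of ordinals, with the order topology). -/
def IsClubBelowOmega1 (C : Set Ordinal.{u}) : Prop :=
  C ⊆ Set.Iio ω₁ ∧ (∀ α < ω₁, ∃ β ∈ C, α ≤ β) ∧ ∀ α < ω₁, α ∈ closure C → α ∈ C

/-- A stationary subset of `ω₁`. -/
def IsStationaryBelowOmega1 (S : Set Ordinal.{u}) : Prop :=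
  S ⊆ Set.Iio ω₁ ∧ ∀ C : Set Ordinal.{u}, IsClubBelowOmega1 C → (S ∩ C).Nonempty

section Aux

variable {T : Type u} [PartialOrder T]

theorem tree_comparable (hT : IsTreeOrder T) {a b s : T} (ha : a ≤ s) (hb : b ≤ s) :
    a ≤ b ∨ b ≤ a := by
  rcases ha.lt_or_eq with ha' | rfl
  · rcases hb.lt_or_eq with hb' | rfl
    · haveI := hT s
      rcases trichotomous_of ((· < ·) : {y : T // y < s} → {y : T // y < s} → Prop)
        ⟨a, ha'⟩ ⟨b, hb'⟩ with h | h | h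
      · exact Or.inl (Subtype.mk_lt_mk.1 h).le
      · exact Or.inl (le_of_eq (congrArg Subtype.val h))
      · exact Or.inr (Subtype.mk_lt_mk.1 h).le
    · exact Or.inl ha
  · exact Or.inr hb

theorem treeHeight_eq_typein (hT : IsTreeOrder T) {x s : T} (h : x < s) :
    treeHeight hT x = @Ordinal.typein {y : T // y < s} (· < ·) (hT s) ⟨x, h⟩ := by
  haveI := hT s; haveI := hT x
  rw [← Ordinal.type_subrel]
  apply Ordinal.type_eq.2
  exact ⟨⟨⟨fun z =>
      ⟨⟨z.1, z.2.trans h⟩, show (⟨z.1, z.2.trans h⟩ : {y : T // y < s}) < ⟨x, h⟩ from z.2⟩,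
    fun w => ⟨w.1.1, show w.1.1 < x from w.2⟩,
    fun z => rfl, fun w => rfl⟩, Iff.rfl⟩⟩

theorem treeHeight_strictMono (hT : IsTreeOrder T) {x s : T} (h : x < s) :
    treeHeight hT x < treeHeight hT s := by
  haveI := hT s
  rw [treeHeight_eq_typein hT h]
  exact Ordinal.typein_lt_type _ _

theorem treeHeight_mono (hT : IsTreeOrder T) {x s : T} (h : x ≤ s) :
    treeHeight hT x ≤ treeHeight hT s := by
  rcases h.lt_or_eq with h' | rfl
  · exact (treeHeight_strictMono hT h').le
  · exact le_rfl

theorem eq_of_comparable_height_eq (hT : IsTreeOrder T) {x y : T}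
    (hc : x ≤ y ∨ y ≤ x) (h : treeHeight hT x = treeHeight hT y) : x = y := by
  rcases hc with h' | h'
  · rcases h'.lt_or_eq with h'' | h''
    · exact absurd (h ▸ treeHeight_strictMono hT h'') (lt_irrefl _)
    · exact h''
  · rcases h'.lt_or_eq with h'' | h''
    · exact absurd (h ▸ treeHeight_strictMono hT h'') (lt_irrefl _)
    · exact h''.symm

theorem exists_height_le (hT : IsTreeOrder T) {s : T} {α : Ordinal.{u}}
    (hα : α ≤ treeHeight hT s) : ∃ x : T, x ≤ s ∧ treeHeight hT x = α := by
  rcases hα.lt_or_eq with h | rfl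
  · haveI := hT s
    refine ⟨(Ordinal.enum ((· < ·) : {y : T // y < s} → {y : T // y < s} → Prop) ⟨α, h⟩).1,
      (Ordinal.enum _ ⟨α, h⟩).2.le, ?_⟩
    rw [treeHeight_eq_typein hT (Ordinal.enum _ ⟨α, h⟩).2]
    simpa using Ordinal.typein_enum _ h
  · exact ⟨s, le_rfl, rfl⟩

theorem countable_Iio_of_lt_omega1 {α : Ordinal.{u}} (h : α < ω₁) :
    (Set.Iio α).Countable := by
  rw [countable_iff_lt_aleph_one, Ordinal.mk_Iio_ordinal, Cardinal.lift_lt_aleph_one]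
  rw [← Cardinal.ord_aleph] at h
  exact Cardinal.lt_ord.1 h

theorem not_countable_Iio_omega1 : ¬(Set.Iio (ω₁ : Ordinal.{u})).Countable := by
  rw [countable_iff_lt_aleph_one, Ordinal.mk_Iio_ordinal, Cardinal.lift_lt_aleph_one,
    ← Cardinal.ord_aleph, Cardinal.card_ord]
  exact lt_irrefl _

theorem countable_Iic_tree (hT : IsTreeOrder T) {x : T} (hx : treeHeight hT x < ω₁) :
    (Set.Iic x).Countable := by
  have h1 : (Set.Iio x).Countable := by
    rw [countable_iff_lt_aleph_one]
    have he : #(Set.Iio x) = (treeHeight hT x).card := by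
      haveI := hT x
      rw [treeHeight, Ordinal.card_type]
      exact Cardinal.mk_congr (Equiv.refl _)
    rw [he, ← Cardinal.ord_aleph] at *
    exact Cardinal.lt_ord.1 hx
  have h2 : Set.Iic x = Set.Iio x ∪ {x} := by
    ext y; simp [le_iff_lt_or_eq]
  rw [h2]
  exact h1.union (Set.countable_singleton x)

theorem antichain_countable [tT : TopologicalSpace T] (htop : tT = treeTopology T)
    (hT : IsTreeOrder T) {S A : Set T} (hSc : OmegaOneCompactIn S) (hAS : A ⊆ S)
    (hA : IsAntichain (· ≤ ·) A) : A.Countable := by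
  have hbasic : ∀ s : Set T, (s ∈ ({s | ∃ a b : T, a < b ∧ s = Set.Ioc a b} ∪
      {s | ∃ b : T, (∀ a : T, ¬a < b) ∧ s = {b}} : Set (Set T))) → IsOpen s := by
    intro s hs
    rw [htop]
    exact TopologicalSpace.isOpen_generateFrom_of_mem hs
  have uniq : ∀ z b b', b ∈ A → b' ∈ A → b ≤ z → b' ≤ z → b = b' := by
    intro z b b' hb hb' h1 h2
    by_contra hne
    rcases tree_comparable hT h1 h2 with h | h
    · exact hA hb hb' hne h
    · exact hA hb' hb (Ne.symm hne) h
  apply hSc A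
  refine ⟨hAS, ?_, ?_⟩
  · rintro z ⟨hzc, -⟩
    by_cases hmin : ∀ a : T, ¬a < z
    · have hop : IsOpen ({z} : Set T) := hbasic _ (Or.inr ⟨z, hmin, rfl⟩)
      obtain ⟨w, hw1, hw2⟩ := mem_closure_iff.1 hzc _ hop rfl
      rwa [show w = z from hw1] at hw2
    · push_neg at hmin
      obtain ⟨a₀, ha₀⟩ := hmin
      have hop : ∀ a : T, a < z → IsOpen (Set.Ioc a z) := fun a ha =>
        hbasic _ (Or.inl ⟨a, z, ha, rfl⟩)
      obtain ⟨b₀, ⟨hab₀, hbz₀⟩, hb₀A⟩ :=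
        mem_closure_iff.1 hzc _ (hop a₀ ha₀) ⟨ha₀, le_rfl⟩
      rcases hbz₀.lt_or_eq with hlt | rfl
      · obtain ⟨b₁, ⟨hab₁, hbz₁⟩, hb₁A⟩ :=
          mem_closure_iff.1 hzc _ (hop b₀ hlt) ⟨hlt, le_rfl⟩
        exact absurd (uniq z b₀ b₁ hb₀A hb₁A hbz₀ hbz₁) (ne_of_lt hab₁)
      · exact hb₀A
  · intro x hx
    by_cases hmin : ∀ a : T, ¬a < x
    · refine ⟨{x}, hbasic _ (Or.inr ⟨x, hmin, rfl⟩), rfl, ?_⟩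
      ext w
      constructor
      · rintro ⟨hw, -⟩; exact hw
      · rintro rfl; exact ⟨rfl, hx⟩
    · push_neg at hmin
      obtain ⟨a, ha⟩ := hmin
      refine ⟨Set.Ioc a x, hbasic _ (Or.inl ⟨a, x, ha, rfl⟩), ⟨ha, le_rfl⟩, ?_⟩
      ext w
      constructor
      · rintro ⟨⟨-, hwx⟩, hwA⟩
        exact uniq x w x hwA hx hwx le_rfl
      · rintro rfl; exact ⟨⟨ha, le_rfl⟩, hx⟩

/-- A set of pairwise distinct-or-equal heights: each level is an antichain. -/
theorem level_antichain (hT : IsTreeOrder T) (P : Set T) (β : Ordinal.{u}) :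
    IsAntichain (· ≤ ·) {x ∈ P | treeHeight hT x = β} := by
  rintro x ⟨-, hx⟩ y ⟨-, hy⟩ hne hle
  rcases hle.lt_or_eq with hlt | rfl
  · have h2 := treeHeight_strictMono hT hlt
    rw [hx, hy] at h2
    exact absurd h2 (lt_irrefl β)
  · exact hne rfl

/-- A subset of an ω₁-compact set with bounded heights is countable. -/
theorem countable_of_height_bdd [tT : TopologicalSpace T] (htop : tT = treeTopology T)
    (hT : IsTreeOrder T) {S P : Set T} (hSc : OmegaOneCompactIn S) (hPS : P ⊆ S)
    {α : Ordinal.{u}} (hα : α < ω₁) (hb : ∀ x ∈ P, treeHeight hT x < α) : P.Countable := by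
  have : P ⊆ ⋃ β ∈ Set.Iio α, {x ∈ P | treeHeight hT x = β} := by
    intro x hx
    exact Set.mem_biUnion (hb x hx) ⟨hx, rfl⟩
  refine Set.Countable.mono this ?_
  refine Set.Countable.biUnion (countable_Iio_of_lt_omega1 hα) ?_
  intro β _
  exact antichain_countable htop hT hSc (fun x hx => hPS hx.1) (level_antichain hT P β)

/-- Heights of an uncountable ω₁-compact set are unbounded below ω₁. -/
theorem heights_unbounded [tT : TopologicalSpace T] (htop : tT = treeTopology T)
    (hT : IsTreeOrder T) {S : Set T} (hSu : ¬S.Countable) (hSc : OmegaOneCompactIn S)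
    {α : Ordinal.{u}} (hα : α < ω₁) : ∃ s ∈ S, α ≤ treeHeight hT s := by
  by_contra h
  push_neg at h
  exact hSu (countable_of_height_bdd htop hT hSc (fun x hx => hx) hα h)

theorem exists_min_not_mem (hT : IsTreeOrder T) {b : Set T} {s : T} (hs : s ∉ b) :
    ∃ u, u ≤ s ∧ u ∉ b ∧ ∀ w, w < u → w ∈ b := by
  haveI := hT s
  by_cases hV : ∃ v : {y : T // y < s}, v.1 ∉ b
  · have wf : WellFounded ((· < ·) : {y : T // y < s} → {y : T // y < s} → Prop) :=
      IsWellFounded.wf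
    set u := wf.min {v : {y : T // y < s} | v.1 ∉ b} hV with hu
    refine ⟨u.1, u.2.le, wf.min_mem _ hV, ?_⟩
    intro w hw
    by_contra hwb
    exact wf.not_lt_min _ (show (⟨w, hw.trans u.2⟩ : {y : T // y < s}) ∈ _ from hwb)
      (Subtype.mk_lt_mk.2 hw)
  · push_neg at hV
    exact ⟨s, le_rfl, hs, fun w hw => hV ⟨w, hw⟩⟩

/-- Antichains of the downward closure are countable. -/
theorem antichain_downClosure_countable [tT : TopologicalSpace T]
    (htop : tT = treeTopology T) (hT : IsTreeOrder T) {S : Set T}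
    (hSc : OmegaOneCompactIn S) {A : Set T} (hAS : A ⊆ downClosure S)
    (hA : IsAntichain (· ≤ ·) A) : A.Countable := by
  have hch : ∀ a ∈ A, ∃ s, s ∈ S ∧ a ≤ s := fun a ha => hAS ha
  choose! g hgS hgle using hch
  have hBanti : IsAntichain (· ≤ ·) (g '' A) := by
    rintro s ⟨a, ha, rfl⟩ t ⟨a', ha', rfl⟩ hne hle
    have h1 : a ≤ g a' := (hgle a ha).trans hle
    have h2 : a' ≤ g a' := hgle a' ha'
    rcases tree_comparable hT h1 h2 with h | h
    · rcases eq_or_ne a a' with rfl | hne'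
      · exact hne rfl
      · exact hA ha ha' hne' h
    · rcases eq_or_ne a' a with rfl | hne'
      · exact hne rfl
      · exact hA ha' ha hne' h
  have hBc : (g '' A).Countable :=
    antichain_countable htop hT hSc (fun s ⟨a, ha, he⟩ => he ▸ hgS a ha) hBanti
  refine Set.MapsTo.countable_of_injOn (Set.mapsTo_image g A) ?_ hBc
  intro a ha a' ha' he
  rcases tree_comparable hT (hgle a ha) (he ▸ hgle a' ha') with h | h
  · by_contra hne
    exact hA ha ha' hne h
  · by_contra hne
    exact hA ha' ha (Ne.symm hne) h

end Aux

/-- If S is an uncountable ω₁-compact subset of a (Hausdorff) tree of height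
ω₁ containing no uncountable chain, then the downward closure S↓ is a Suslin tree: it has
height ω₁ and all of its chains and antichains are countable. -/
theorem downClosure_suslin_of_omegaOneCompact {T : Type u} [PartialOrder T]
    [tT : TopologicalSpace T] (htop : tT = treeTopology T)
    (hT : IsTreeOrder T) (hH : IsHausdorffTree T) (hht : HasHeightOmega1 hT)
    (S : Set T) (hSu : ¬S.Countable) (hSc : OmegaOneCompactIn S)
    (hnochain : ∀ c ⊆ S, IsChain (· ≤ ·) c → c.Countable) :
    (∀ α < ω₁, ∃ x ∈ downClosure S, treeHeight hT x = α) ∧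
    (∀ c ⊆ downClosure S, IsChain (· ≤ ·) c → c.Countable) ∧
    (∀ A ⊆ downClosure S, IsAntichain (· ≤ ·) A → A.Countable) := by
  refine ⟨?_, ?_, ?_⟩
  · -- heights
    intro α hα
    obtain ⟨s, hsS, hs⟩ := heights_unbounded htop hT hSu hSc hα
    obtain ⟨x, hxs, hx⟩ := exists_height_le hT hs
    exact ⟨x, ⟨s, hsS, hxs⟩, hx⟩
  · -- chains
    intro c hcsub hc
    by_contra hcu
    -- the branch b
    set b : Set T := downClosure c with hb
    have hbdown : ∀ {u v : T}, u ≤ v → v ∈ b → u ∈ b := by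
      rintro u v huv ⟨y, hy, hvy⟩
      exact ⟨y, hy, huv.trans hvy⟩
    have hcb : c ⊆ b := fun x hx => ⟨x, hx, le_rfl⟩
    have hbchain : IsChain (· ≤ ·) b := by
      rintro x ⟨y, hy, hxy⟩ x' ⟨y', hy', hxy'⟩ -
      rcases hc.total hy hy' with h | h
      · exact tree_comparable hT (hxy.trans h) hxy'
      · exact tree_comparable hT hxy (hxy'.trans h)
    have hbS : b ⊆ downClosure S := by
      rintro x ⟨y, hy, hxy⟩
      obtain ⟨s, hsS, hys⟩ := hcsub hy
      exact ⟨s, hsS, hxy.trans hys⟩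
    -- heights of c are unbounded
    have hcunb : ∀ α < ω₁, ∃ x ∈ c, α ≤ treeHeight hT x := by
      intro α hα
      by_contra h
      push_neg at h
      apply hcu
      have : c ⊆ ⋃ β ∈ Set.Iio α, {x ∈ c | treeHeight hT x = β} := fun x hx =>
        Set.mem_biUnion (h x hx) ⟨hx, rfl⟩
      refine Set.Countable.mono this (Set.Countable.biUnion
        (countable_Iio_of_lt_omega1 hα) fun β _ => Set.Subsingleton.countable ?_)
      rintro x ⟨hxc, hxβ⟩ y ⟨hyc, hyβ⟩
      exact eq_of_comparable_height_eq hT (hc.total hxc hyc) (hxβ.trans hyβ.symm)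
    -- each level is present in b
    have hlev : ∀ α < ω₁, ∃ x ∈ b, treeHeight hT x = α := by
      intro α hα
      obtain ⟨y, hy, hyα⟩ := hcunb α hα
      obtain ⟨x, hxy, hx⟩ := exists_height_le hT hyα
      exact ⟨x, ⟨y, hy, hxy⟩, hx⟩
    -- S ∩ b is a chain, hence countable, hence height-bounded
    have hSbc : (S ∩ b).Countable :=
      hnochain _ (Set.inter_subset_left) (hbchain.mono Set.inter_subset_right)
    obtain ⟨α₀, hα₀lt, hα₀⟩ : ∃ α₀ < ω₁, ∀ s ∈ S ∩ b, treeHeight hT s < α₀ := by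
      haveI : Countable ↥(S ∩ b) := hSbc.to_subtype
      have hsup : (⨆ s : ↥(S ∩ b), treeHeight hT s.1) < ω₁ := by
        rw [show (ω₁ : Ordinal.{u}) = (Cardinal.aleph 1).ord from (Cardinal.ord_aleph 1).symm]
        apply Ordinal.iSup_lt_ord
        · rw [Cardinal.isRegular_aleph_one.cof_eq]
          exact lt_of_le_of_lt Cardinal.mk_le_aleph0 Cardinal.aleph0_lt_aleph_one
        · intro i
          rw [← show (ω₁ : Ordinal.{u}) = (Cardinal.aleph 1).ord from (Cardinal.ord_aleph 1).symm]
          exact hht.1 i.1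
      refine ⟨Order.succ (⨆ s : ↥(S ∩ b), treeHeight hT s.1), ?_, ?_⟩
      · exact (Cardinal.isSuccLimit_omega 1).succ_lt hsup
      · intro s hs
        calc treeHeight hT s ≤ ⨆ s : ↥(S ∩ b), treeHeight hT s.1 :=
              Ordinal.le_iSup (fun s : ↥(S ∩ b) => treeHeight hT s.1) ⟨s, hs⟩
          _ < _ := Order.lt_succ _
    have hSne : S.Nonempty := by
      rcases S.eq_empty_or_nonempty with rfl | h
      · exact absurd Set.countable_empty hSu
      · exact h
    haveI : Nonempty T := ⟨hSne.choose⟩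
    set I : Set Ordinal.{u} := {α | α₀ ≤ α ∧ α < ω₁} with hI
    -- for each α in [α₀, ω₁), pick x_α in b at level α, s_α in S above it, and the
    -- branching-off point u_α
    have key : ∀ α ∈ I,
        ∃ u : T, u ∈ downClosure S ∧ u ∉ b ∧ (∀ w, w < u → w ∈ b) ∧ α < treeHeight hT u := by
      rintro α ⟨hα₀α, hαlt⟩
      obtain ⟨x, hxb, hxh⟩ := hlev α hαlt
      obtain ⟨s, hsS, hxs⟩ := hbS hxb
      have hsnb : s ∉ b := by
        intro hsb
        exact absurd ((hxh ▸ treeHeight_mono hT hxs).trans_lt (hα₀ s ⟨hsS, hsb⟩))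
          (not_lt_of_ge hα₀α)
      obtain ⟨u, hus, hub, humin⟩ := exists_min_not_mem hT hsnb
      have hxu : x < u := by
        rcases tree_comparable hT hxs hus with h | h
        · rcases h.lt_or_eq with h' | rfl
          · exact h'
          · exact absurd hxb hub
        · exact absurd (hbdown h hxb) hub
      exact ⟨u, ⟨s, hsS, hus⟩, hub, humin, hxh ▸ treeHeight_strictMono hT hxu⟩
    choose! f hf1 hf2 hf3 hf4 using key
    have hanti : IsAntichain (· ≤ ·) (f '' I) := by
      rintro u ⟨α, hα, rfl⟩ v ⟨γ, hγ, rfl⟩ hne hle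
      rcases hle.lt_or_eq with hlt | he
      · exact hf2 α hα ((hf3 γ hγ) _ hlt)
      · exact hne he
    have hantiC : (f '' I).Countable :=
      antichain_downClosure_countable htop hT hSc
        (by rintro u ⟨α, hα, rfl⟩; exact hf1 α hα) hanti
    -- fibers of f on I are countable
    have hIc : I.Countable := by
      have hsub : I ⊆ ⋃ u ∈ f '' I, {α ∈ I | f α = u} := fun α hα =>
        Set.mem_biUnion (Set.mem_image_of_mem f hα) ⟨hα, rfl⟩
      refine Set.Countable.mono hsub (Set.Countable.biUnion hantiC fun u _ => ?_)
      have : {α ∈ I | f α = u} ⊆ Set.Iio (treeHeight hT u) := by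
        rintro α ⟨hα, rfl⟩
        exact Set.mem_Iio.2 (hf4 α hα)
      exact Set.Countable.mono this (countable_Iio_of_lt_omega1 (hht.1 u))
    -- but I is uncountable
    apply not_countable_Iio_omega1.{u}
    have : Set.Iio (ω₁ : Ordinal.{u}) ⊆ Set.Iio α₀ ∪ I := by
      intro α hα
      rcases lt_or_ge α α₀ with h | h
      · exact Or.inl h
      · exact Or.inr ⟨h, hα⟩
    exact Set.Countable.mono this ((countable_Iio_of_lt_omega1 hα₀lt).union hIc)
  · -- antichains
    intro A hAS hA
    exact antichain_downClosure_countable htop hT hSc hAS hA
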